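/- Let K ⊆ ℝ^d, d ≥ 2, be a closed convex set. Then every (d−1)-face of K is exposed. Moreover, the (d−2)-skeleton of K satisfies ext_{d−2}(K) = bd(K) \ ⋃{ri(F) : F is an exposed (d−1)-face of K}, where bd denotes the topological boundary and ri the relative interior. -/

import Mathlib

/-- `F` is a face of the closed convex set `K`: a convex subset of `K` such that whenever a
relative interior point of a segment `[x,y] ⊆ K` lies in `F`, the whole segment lies in `F`. -/
def IsFaceOf {X : Type*} [AddCommGroup X] [Module ℝ X] (K F : Set X) : Prop :=
  F ⊆ K ∧ Convex ℝ F ∧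
    ∀ x ∈ K, ∀ y ∈ K, (openSegment ℝ x y ∩ F).Nonempty → segment ℝ x y ⊆ F

/-- The affine dimension of a set: the dimension of the direction of its affine span. -/
noncomputable def affDim {X : Type*} [AddCommGroup X] [Module ℝ X] (A : Set X) : ℕ :=
  Module.finrank ℝ (affineSpan ℝ A).direction

/-- `F` is an exposed face of `K`: the intersection of `K` with a supporting hyperplane
`{y : φ y = sup φ(K)}` for some nonzero linear functional `φ` with `sup φ(K) < +∞`. -/
def IsExposedFaceOf {X : Type*} [AddCommGroup X] [Module ℝ X] (K F : Set X) : Prop :=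
  ∃ φ : X →ₗ[ℝ] ℝ, φ ≠ 0 ∧ BddAbove (φ '' K) ∧ F = K ∩ {y | φ y = sSup (φ '' K)}

/-- The `k`-skeleton of `K`: the set of `k`-extreme points, i.e. the points lying in the
relative interior of a face of `K` of affine dimension at most `k`. -/
def kSkeleton {X : Type*} [NormedAddCommGroup X] [NormedSpace ℝ X]
    (k : ℕ) (K : Set X) : Set X :=
  {x : X | x ∈ K ∧ ∃ F : Set X, IsFaceOf K F ∧ x ∈ intrinsicInterior ℝ F ∧ affDim F ≤ k}

section Aux

open Set

variable {V : Type*} [NormedAddCommGroup V] [NormedSpace ℝ V]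

theorem mem_intrinsicInterior_iff_ball {s : Set V} {x : V} :
    x ∈ intrinsicInterior ℝ s ↔
      x ∈ affineSpan ℝ s ∧ ∃ ε > 0, ∀ w, w ∈ affineSpan ℝ s → dist w x < ε → w ∈ s := by
  constructor
  · intro hx
    obtain ⟨y, hy, rfl⟩ := mem_intrinsicInterior.1 hx
    refine ⟨y.2, ?_⟩
    have h1 : ((↑) ⁻¹' s : Set (affineSpan ℝ s)) ∈ nhds y := mem_interior_iff_mem_nhds.1 hy
    obtain ⟨ε, hε, hball⟩ := Metric.mem_nhds_iff.1 h1
    refine ⟨ε, hε, fun w hw hdist => ?_⟩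
    exact hball (show (⟨w, hw⟩ : affineSpan ℝ s) ∈ Metric.ball y ε by
      simpa [Metric.mem_ball, Subtype.dist_eq] using hdist)
  · rintro ⟨hx, ε, hε, h⟩
    refine mem_intrinsicInterior.2 ⟨⟨x, hx⟩, ?_, rfl⟩
    rw [mem_interior_iff_mem_nhds]
    refine Metric.mem_nhds_iff.2 ⟨ε, hε, fun w hw => ?_⟩
    exact h w w.2 (by simpa [Metric.mem_ball, Subtype.dist_eq] using hw)

theorem exists_openSegment_of_mem_intrinsicInterior {s : Set V} {x y : V}
    (hx : x ∈ intrinsicInterior ℝ s) (hy : y ∈ s) :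
    ∃ z ∈ s, x ∈ openSegment ℝ y z := by
  rw [mem_intrinsicInterior_iff_ball] at hx
  obtain ⟨hxs, ε, hε, hball⟩ := hx
  set t : ℝ := ε / (2 * (‖x - y‖ + 1)) with ht
  have ht0 : 0 < t := by positivity
  set z : V := x + t • (x - y) with hz
  have hzspan : z ∈ affineSpan ℝ s := by
    have := AffineSubspace.smul_vsub_vadd_mem (affineSpan ℝ s) t hxs
      (subset_affineSpan ℝ s hy) hxs
    simpa [hz, vsub_eq_sub, vadd_eq_add, add_comm] using this
  have hdist : dist z x < ε := by
    have h1 : dist z x = t * ‖x - y‖ := by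
      rw [dist_eq_norm, hz]
      simp [norm_smul, abs_of_pos ht0]
    rw [h1, ht]
    rw [div_mul_eq_mul_div, div_lt_iff₀ (by positivity)]
    nlinarith [norm_nonneg (x - y)]
  have hzs : z ∈ s := hball z hzspan hdist
  have h1t : (0:ℝ) < 1 + t := by positivity
  refine ⟨z, hzs, t / (1 + t), 1 / (1 + t), by positivity, by positivity, by field_simp; ring, ?_⟩
  rw [hz]
  match_scalars <;> field_simp <;> ring

theorem openSegment_absorb {s : Set V} (hs : Convex ℝ s) {z b x : V}
    (hz : z ∈ s) (hb : b ∈ intrinsicInterior ℝ s) (hx : x ∈ openSegment ℝ z b) :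
    x ∈ intrinsicInterior ℝ s := by
  obtain ⟨a, c, ha, hc, hac, rfl⟩ := hx
  rw [mem_intrinsicInterior_iff_ball] at hb ⊢
  obtain ⟨hbspan, ε, hε, hball⟩ := hb
  have hzspan : z ∈ affineSpan ℝ s := subset_affineSpan ℝ s hz
  have hxspan : a • z + c • b ∈ affineSpan ℝ s := by
    have h1 := AffineSubspace.smul_vsub_vadd_mem (affineSpan ℝ s) c hbspan hzspan hzspan
    have h2 : a • z + c • b = c • (b -ᵥ z) +ᵥ z := by
      rw [vsub_eq_sub, vadd_eq_add]
      have : a = 1 - c := by linarith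
      rw [this]; module
    rwa [h2]
  refine ⟨hxspan, c * ε, by positivity, fun w hw hdist => ?_⟩
  obtain ⟨u, hu⟩ : ∃ u : V, u = b + c⁻¹ • (w - (a • z + c • b)) := ⟨_, rfl⟩
  have huspan : u ∈ affineSpan ℝ s := by
    have h1 := AffineSubspace.smul_vsub_vadd_mem (affineSpan ℝ s) c⁻¹ hw hxspan hbspan
    have h2 : u = c⁻¹ • (w -ᵥ (a • z + c • b)) +ᵥ b := by
      rw [vsub_eq_sub, vadd_eq_add, hu]; ring_nf; module
    rwa [h2]
  have hudist : dist u b < ε := by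
    have h1 : dist u b = c⁻¹ * dist w (a • z + c • b) := by
      rw [dist_eq_norm, dist_eq_norm, hu]
      simp only [add_sub_cancel_left, norm_smul, Real.norm_eq_abs,
        abs_of_pos (inv_pos.2 hc)]
    rw [h1]
    calc c⁻¹ * dist w (a • z + c • b) < c⁻¹ * (c * ε) := by
          exact mul_lt_mul_of_pos_left hdist (inv_pos.2 hc)
      _ = ε := by field_simp
  have hus : u ∈ s := hball u huspan hudist
  have hw' : w = a • z + c • u := by
    rw [hu]
    have hc0 : c ≠ 0 := ne_of_gt hc
    match_scalars <;> (field_simp; try ring)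
  rw [hw']
  exact hs hz hus ha.le hc.le hac

theorem openSegment_slide {y z x : V} {s1 t1 s : ℝ} (hs1 : 0 < s1) (ht1 : 0 < t1)
    (hsum : s1 + t1 = 1) (hx : x = s1 • y + t1 • z) (hs : 0 < s) (hss : s ≤ s1) :
    ∃ w ∈ segment ℝ x z, x = s • y + (1 - s) • w := by
  have ht1' : t1 = 1 - s1 := by linarith
  subst ht1'
  have hs1lt : s1 < 1 := by linarith
  have hslt : s < 1 := lt_of_le_of_lt hss hs1lt
  have h1s : (0:ℝ) < 1 - s := by linarith
  obtain ⟨μ, hμ⟩ : ∃ μ : ℝ, μ = (1 - s / s1) / (1 - s) := ⟨_, rfl⟩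
  have hds1 : s / s1 ≤ 1 := by rw [div_le_one hs1]; exact hss
  have hμ0 : 0 ≤ μ := hμ ▸ div_nonneg (by linarith) h1s.le
  have hμ1 : μ ≤ 1 := by
    rw [hμ, div_le_one h1s]
    have : s ≤ s / s1 := by
      rw [le_div_iff₀ hs1]
      nlinarith
    linarith
  refine ⟨μ • x + (1 - μ) • z, ⟨μ, 1 - μ, hμ0, by linarith, by ring, rfl⟩, ?_⟩
  rw [hx, hμ]
  have hs10 : s1 ≠ 0 := ne_of_gt hs1
  have h1s0 : (1:ℝ) - s ≠ 0 := ne_of_gt h1s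
  match_scalars
  · field_simp
    ring
  · field_simp
    ring

theorem affDim_mono [FiniteDimensional ℝ V] {A B : Set V} (h : A ⊆ B) :
    affDim A ≤ affDim B :=
  Submodule.finrank_mono (AffineSubspace.direction_le (affineSpan_mono ℝ h))

theorem affineSpan_eq_of_subset_of_dim_ge [FiniteDimensional ℝ V] {A B : Set V} (hAB : A ⊆ B)
    (hne : A.Nonempty) (hdim : affDim B ≤ affDim A) : affineSpan ℝ A = affineSpan ℝ B := by
  obtain ⟨p, hp⟩ := hne
  have hle := affineSpan_mono ℝ hAB
  have hdir : (affineSpan ℝ A).direction = (affineSpan ℝ B).direction :=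
    Submodule.eq_of_le_of_finrank_eq (AffineSubspace.direction_le hle)
      (le_antisymm (Submodule.finrank_mono (AffineSubspace.direction_le hle)) hdim)
  exact (AffineSubspace.eq_iff_direction_eq_of_mem (subset_affineSpan ℝ A hp)
    (subset_affineSpan ℝ B (hAB hp))).2 hdir

theorem intrinsicInterior_mono_of_span_eq {A B : Set V} (hAB : A ⊆ B)
    (hspan : affineSpan ℝ A = affineSpan ℝ B) :
    intrinsicInterior ℝ A ⊆ intrinsicInterior ℝ B := by
  intro x hx
  rw [mem_intrinsicInterior_iff_ball] at hx ⊢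
  obtain ⟨hxs, ε, hε, h⟩ := hx
  exact ⟨hspan ▸ hxs, ε, hε, fun w hw hd => hAB (h w (hspan ▸ hw) hd)⟩

theorem affineSpan_eq_top_of_interior_nonempty {s : Set V} (h : (interior s).Nonempty) :
    affineSpan ℝ s = ⊤ := by
  obtain ⟨b, hb⟩ := h
  have hbs : b ∈ s := interior_subset hb
  obtain ⟨ε, hε, hball⟩ := Metric.mem_nhds_iff.1 (mem_interior_iff_mem_nhds.1 hb)
  rw [eq_top_iff]
  intro v _
  set t : ℝ := ε / (2 * (‖v - b‖ + 1)) with htdef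
  have ht0 : 0 < t := by positivity
  have hmem : b + t • (v - b) ∈ s := by
    apply hball
    rw [Metric.mem_ball, dist_eq_norm]
    have : b + t • (v - b) - b = t • (v - b) := by abel
    rw [this, norm_smul, Real.norm_eq_abs, abs_of_pos ht0, htdef]
    rw [div_mul_eq_mul_div, div_lt_iff₀ (by positivity)]
    nlinarith [norm_nonneg (v - b)]
  have h1 := AffineSubspace.smul_vsub_vadd_mem (affineSpan ℝ s) t⁻¹
    (subset_affineSpan ℝ s hmem) (subset_affineSpan ℝ s hbs) (subset_affineSpan ℝ s hbs)
  have h2 : v = t⁻¹ • ((b + t • (v - b)) -ᵥ b) +ᵥ b := by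
    rw [vsub_eq_sub, vadd_eq_add]
    have ht0' : t ≠ 0 := ne_of_gt ht0
    match_scalars <;> field_simp <;> ring
  rwa [← h2] at h1

theorem interior_nonempty_of_affineSpan_eq_top [FiniteDimensional ℝ V] {s : Set V}
    (hconv : Convex ℝ s) (hne : s.Nonempty) (hspan : affineSpan ℝ s = ⊤) :
    (interior s).Nonempty := by
  obtain ⟨b, hb⟩ := hne.intrinsicInterior hconv
  rw [mem_intrinsicInterior_iff_ball] at hb
  obtain ⟨-, ε, hε, h⟩ := hb
  refine ⟨b, ?_⟩
  rw [mem_interior_iff_mem_nhds]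
  refine Metric.mem_nhds_iff.2 ⟨ε, hε, fun w hw => ?_⟩
  exact h w (by rw [hspan]; exact AffineSubspace.mem_top ℝ V w) (by simpa [Metric.mem_ball] using hw)

theorem exists_linearMap_ne_zero_vanishing [FiniteDimensional ℝ V] {W : Submodule ℝ V}
    (hW : W ≠ ⊤) : ∃ φ : V →ₗ[ℝ] ℝ, φ ≠ 0 ∧ ∀ w ∈ W, φ w = 0 := by
  obtain ⟨v, hv⟩ : ∃ v, v ∉ W := by
    by_contra h
    push_neg at h
    exact hW (eq_top_iff.2 fun x _ => h x)
  have hWconv : Convex ℝ (W : Set V) := fun a ha b hb p q hp hq hpq =>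
    W.add_mem (W.smul_mem _ ha) (W.smul_mem _ hb)
  have hWcl : IsClosed (W : Set V) := Submodule.closed_of_finiteDimensional W
  obtain ⟨f, u, hfu, huv⟩ := geometric_hahn_banach_closed_point hWconv hWcl hv
  have hzero : ∀ w ∈ W, f w = 0 := by
    intro w hw
    by_contra h0
    have h1 : ∀ t : ℝ, t * f w < u := by
      intro t
      have := hfu (t • w) (W.smul_mem t hw)
      simpa using this
    rcases lt_or_gt_of_ne h0 with h | h
    · have := h1 ((u + 1) / f w)
      rw [div_mul_cancel₀ _ (ne_of_lt h)] at this
      linarith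
    · have := h1 ((u + 1) / f w)
      rw [div_mul_cancel₀ _ (ne_of_gt h)] at this
      linarith
  refine ⟨f.toLinearMap, ?_, hzero⟩
  intro h0
  have h1 : f v = 0 := by
    have := congrArg (fun g : V →ₗ[ℝ] ℝ => g v) h0
    simpa using this
  have h2 := hfu 0 W.zero_mem
  rw [map_zero] at h2
  linarith

theorem exists_support_functional {K : Set V} (hKcv : Convex ℝ K) {x : V}
    (hx : x ∉ interior K) (hint : (interior K).Nonempty) :
    ∃ φ : V →ₗ[ℝ] ℝ, φ ≠ 0 ∧ ∀ y ∈ K, φ y ≤ φ x := by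
  obtain ⟨f, hf⟩ := geometric_hahn_banach_open_point (hKcv.interior) isOpen_interior hx
  obtain ⟨a₀, ha₀⟩ := hint
  refine ⟨f.toLinearMap, ?_, ?_⟩
  · intro h0
    have h1 : f a₀ = 0 := by
      have := congrArg (fun g : V →ₗ[ℝ] ℝ => g a₀) h0
      simpa using this
    have h2 : f x = 0 := by
      have := congrArg (fun g : V →ₗ[ℝ] ℝ => g x) h0
      simpa using this
    have := hf a₀ ha₀
    rw [h1, h2] at this
    exact lt_irrefl 0 this
  · intro y hy
    have key : ∀ t ∈ Set.Ioo (0:ℝ) 1, (1 - t) * f a₀ + t * f y < f x := by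
      intro t ht
      have hmem : (1 - t) • a₀ + t • y ∈ interior K :=
        hKcv.openSegment_interior_self_subset_interior ha₀ hy
          ⟨1 - t, t, by linarith [ht.2], ht.1, by ring, rfl⟩
      have := hf _ hmem
      simpa [map_add, map_smul, smul_eq_mul] using this
    have hcont : Continuous fun t : ℝ => (1 - t) * f a₀ + t * f y := by continuity
    have htend : Filter.Tendsto (fun t : ℝ => (1 - t) * f a₀ + t * f y)
        (nhdsWithin 1 (Set.Ioo (0:ℝ) 1)) (nhds (f y)) := by
      have h1 := hcont.tendsto' 1 (f y) (by ring)
      exact h1.mono_left nhdsWithin_le_nhds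
    have hne : (nhdsWithin (1:ℝ) (Set.Ioo 0 1)).NeBot := by
      rw [← mem_closure_iff_nhdsWithin_neBot, closure_Ioo (by norm_num : (0:ℝ) ≠ 1)]
      exact Set.right_mem_Icc.2 (by norm_num)
    refine le_of_tendsto htend ?_
    filter_upwards [self_mem_nhdsWithin] with t ht
    exact (key t ht).le

theorem affDim_le_of_subset_hyperplane [FiniteDimensional ℝ V] {E : Set V} {φ : V →ₗ[ℝ] ℝ}
    (hφ : φ ≠ 0) {M : ℝ} (hE : ∀ y ∈ E, φ y = M) :
    affDim E ≤ Module.finrank ℝ V - 1 := by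
  have hker : (affineSpan ℝ E).direction ≤ LinearMap.ker φ := by
    rw [direction_affineSpan, vectorSpan_def]
    apply Submodule.span_le.2
    rintro v hv
    obtain ⟨y, hy, z, hz, rfl⟩ := hv
    simp only [SetLike.mem_coe, LinearMap.mem_ker, vsub_eq_sub, map_sub, hE y hy, hE z hz, sub_self]
  have hkt : LinearMap.ker φ ≠ ⊤ := by
    intro h
    apply hφ
    ext v
    simpa using LinearMap.mem_ker.1 (h ▸ Submodule.mem_top (x := v))
  have h1 : Module.finrank ℝ (LinearMap.ker φ) < Module.finrank ℝ V :=
    Submodule.finrank_lt hkt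
  have h2 := Submodule.finrank_mono hker
  unfold affDim
  omega

theorem IsExposedFaceOf.isFaceOf {K F : Set V} (hKcv : Convex ℝ K)
    (h : IsExposedFaceOf K F) : IsFaceOf K F := by
  obtain ⟨φ, hφ, hbdd, rfl⟩ := h
  refine ⟨Set.inter_subset_left, hKcv.inter (convex_hyperplane φ.isLinear _), ?_⟩
  rintro y hy z hz ⟨p, hpseg, hpK, hpM⟩
  obtain ⟨a, c, ha, hc, hac, rfl⟩ := hpseg
  have hyM : φ y ≤ sSup (φ '' K) := le_csSup hbdd ⟨y, hy, rfl⟩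
  have hzM : φ z ≤ sSup (φ '' K) := le_csSup hbdd ⟨z, hz, rfl⟩
  have hcomb : a * φ y + c * φ z = sSup (φ '' K) := by
    have := hpM
    simpa [Set.mem_setOf_eq, map_add, map_smul, smul_eq_mul] using this
  have hM : a * sSup (φ '' K) + c * sSup (φ '' K) = sSup (φ '' K) := by
    rw [← add_mul, hac, one_mul]
  have hyM' : φ y = sSup (φ '' K) := by
    by_contra h
    have hlt : φ y < sSup (φ '' K) := lt_of_le_of_ne hyM h
    linarith [mul_lt_mul_of_pos_left hlt ha, mul_le_mul_of_nonneg_left hzM hc.le, hM]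
  have hzM' : φ z = sSup (φ '' K) := by
    by_contra h
    have hlt : φ z < sSup (φ '' K) := lt_of_le_of_ne hzM h
    linarith [mul_lt_mul_of_pos_left hlt hc, mul_le_mul_of_nonneg_left hyM ha.le, hM]
  rintro q ⟨a', c', ha', hc', hac', rfl⟩
  refine ⟨hKcv hy hz ha' hc' hac', ?_⟩
  simp only [Set.mem_setOf_eq, map_add, map_smul, smul_eq_mul, hyM', hzM']
  linear_combination sSup (φ '' K) * hac'

/-- The minimal face of `K` containing `x`. -/
def faceAt (K : Set V) (x : V) : Set V :=
  {y ∈ K | ∃ z ∈ K, x ∈ openSegment ℝ y z}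

theorem mem_faceAt_self {K : Set V} {x : V} (hx : x ∈ K) : x ∈ faceAt K x :=
  ⟨hx, x, hx, by rw [openSegment_same]; exact Set.mem_singleton x⟩

theorem faceAt_convex {K : Set V} (hK : Convex ℝ K) {x : V} : Convex ℝ (faceAt K x) := by
  rintro y₁ ⟨hy₁K, z₁, hz₁K, hxz₁⟩ y₂ ⟨hy₂K, z₂, hz₂K, hxz₂⟩ a b ha hb hab
  rcases eq_or_lt_of_le ha with rfl | ha'
  · have hb1 : b = 1 := by linarith
    subst hb1
    simpa using ⟨hy₂K, z₂, hz₂K, hxz₂⟩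
  rcases eq_or_lt_of_le hb with rfl | hb'
  · have ha1 : a = 1 := by linarith
    subst ha1
    simpa using ⟨hy₁K, z₁, hz₁K, hxz₁⟩
  obtain ⟨s₁, t₁, hs₁, ht₁, hst₁, hxeq₁⟩ := hxz₁
  obtain ⟨s₂, t₂, hs₂, ht₂, hst₂, hxeq₂⟩ := hxz₂
  have hsmin : (0:ℝ) < min s₁ s₂ := lt_min hs₁ hs₂
  obtain ⟨w₁, hw₁seg, hxw₁⟩ :=
    openSegment_slide hs₁ ht₁ hst₁ hxeq₁.symm hsmin (min_le_left _ _)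
  obtain ⟨w₂, hw₂seg, hxw₂⟩ :=
    openSegment_slide hs₂ ht₂ hst₂ hxeq₂.symm hsmin (min_le_right _ _)
  have hxK : x ∈ K := hxeq₁ ▸ hK hy₁K hz₁K hs₁.le ht₁.le hst₁
  have hw₁K : w₁ ∈ K := hK.segment_subset hxK hz₁K hw₁seg
  have hw₂K : w₂ ∈ K := hK.segment_subset hxK hz₂K hw₂seg
  have hs1' : min s₁ s₂ < 1 := lt_of_le_of_lt (min_le_left _ _) (by linarith)
  refine ⟨hK hy₁K hy₂K ha hb hab, a • w₁ + b • w₂, hK hw₁K hw₂K ha hb hab,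
    min s₁ s₂, 1 - min s₁ s₂, hsmin, by linarith, by ring, ?_⟩
  calc (min s₁ s₂) • (a • y₁ + b • y₂) + (1 - min s₁ s₂) • (a • w₁ + b • w₂)
      = a • ((min s₁ s₂) • y₁ + (1 - min s₁ s₂) • w₁)
        + b • ((min s₁ s₂) • y₂ + (1 - min s₁ s₂) • w₂) := by module
    _ = a • x + b • x := by rw [← hxw₁, ← hxw₂]
    _ = x := by rw [← add_smul, hab, one_smul]

theorem faceAt_isFaceOf {K : Set V} (hK : Convex ℝ K) {x : V} (hx : x ∈ K) :
    IsFaceOf K (faceAt K x) := by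
  refine ⟨fun y hy => hy.1, faceAt_convex hK, ?_⟩
  rintro y₁ hy₁ y₂ hy₂ ⟨p, hpseg, hpK, z, hzK, hxpz⟩
  obtain ⟨a, b, ha, hb, hab, rfl⟩ := hpseg
  obtain ⟨sp, tp, hsp, htp, hstp, hxp⟩ := hxpz
  rintro w ⟨c, e, hc, he, hce, rfl⟩
  obtain ⟨η, hη⟩ : ∃ η : ℝ, η = min (sp * a) (sp * b) := ⟨_, rfl⟩
  have hη0 : 0 < η := hη ▸ lt_min (by positivity) (by positivity)
  have h1η : (0:ℝ) < 1 + η := by positivity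
  obtain ⟨u, hu⟩ : ∃ u : V, u = (1 + η) • x - η • (c • y₁ + e • y₂) := ⟨_, rfl⟩
  have hc1 : c ≤ 1 := by linarith
  have he1 : e ≤ 1 := by linarith
  have hηa : η ≤ sp * a := hη ▸ min_le_left _ _
  have hηb : η ≤ sp * b := hη ▸ min_le_right _ _
  have hcoef1 : 0 ≤ (1 + η) * (sp * a) - η * c := by nlinarith
  have hcoef2 : 0 ≤ (1 + η) * (sp * b) - η * e := by nlinarith
  have hcoef3 : 0 < (1 + η) * tp := by positivity
  have hsum : ((1 + η) * (sp * a) - η * c) + ((1 + η) * (sp * b) - η * e) + (1 + η) * tp = 1 := by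
    linear_combination (1 + η) * sp * hab + (1 + η) * hstp - η * hce
  have hexp : u = ((1 + η) * (sp * a) - η * c) • y₁ + ((1 + η) * (sp * b) - η * e) • y₂
      + ((1 + η) * tp) • z := by
    rw [hu, ← hxp]
    module
  have huK : u ∈ K := by
    rw [hexp]
    have h3 := hK.sum_mem (t := (Finset.univ : Finset (Fin 3)))
      (w := ![(1 + η) * (sp * a) - η * c, (1 + η) * (sp * b) - η * e, (1 + η) * tp])
      (z := ![y₁, y₂, z])
      (by intro i _; fin_cases i <;> simp [hcoef1, hcoef2, hcoef3.le])
      (by simp [Fin.sum_univ_three, hsum])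
      (by intro i _
          fin_cases i
          · simpa using hy₁
          · simpa using hy₂
          · simpa using hzK)
    simpa [Fin.sum_univ_three] using h3
  refine ⟨hK hy₁ hy₂ hc he hce, u, huK,
    η / (1 + η), 1 / (1 + η), by positivity, by positivity, by field_simp; ring, ?_⟩
  rw [hu]
  have h1η' : (1:ℝ) + η ≠ 0 := ne_of_gt h1η
  match_scalars <;> (field_simp; try ring)

theorem mem_intrinsicInterior_faceAt [FiniteDimensional ℝ V] {K : Set V} (hK : Convex ℝ K)
    {x : V} (hx : x ∈ K) : x ∈ intrinsicInterior ℝ (faceAt K x) := by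
  have hface := faceAt_isFaceOf hK hx
  have hxmem : x ∈ faceAt K x := mem_faceAt_self hx
  obtain ⟨b, hb⟩ := Set.Nonempty.intrinsicInterior (faceAt_convex hK) ⟨x, hxmem⟩
  obtain ⟨hbK, z, hzK, hxbz⟩ := intrinsicInterior_subset hb
  have hzF : z ∈ faceAt K x :=
    hface.2.2 b hbK z hzK ⟨x, hxbz, hxmem⟩ (right_mem_segment ℝ b z)
  exact openSegment_absorb (faceAt_convex hK) hzF hb (openSegment_symm ℝ b z ▸ hxbz)

theorem part1 {d : ℕ} (hd : 2 ≤ d) (K : Set (EuclideanSpace ℝ (Fin d)))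
    (hKcv : Convex ℝ K) :
    ∀ F : Set (EuclideanSpace ℝ (Fin d)),
      IsFaceOf K F → affDim F = d - 1 → IsExposedFaceOf K F := by
  intro F hF hdim
  obtain ⟨hFK, hFcv, hface⟩ := hF
  have hfrk : Module.finrank ℝ (EuclideanSpace ℝ (Fin d)) = d := finrank_euclideanSpace_fin
  have hFne : F.Nonempty := by
    by_contra h
    rw [Set.not_nonempty_iff_eq_empty] at h
    subst h
    rw [affDim, AffineSubspace.span_empty, AffineSubspace.direction_bot] at hdim
    simp at hdim
    omega
  obtain ⟨x, hx⟩ := hFne.intrinsicInterior hFcv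
  have hxF : x ∈ F := intrinsicInterior_subset hx
  by_cases hint : (interior K).Nonempty
  · by_cases hxi : x ∈ interior K
    · exfalso
      have hKspan : affineSpan ℝ K = ⊤ := affineSpan_eq_top_of_interior_nonempty ⟨x, hxi⟩
      have hKF : K ⊆ F := by
        intro y hy
        obtain ⟨z, hz, hxz⟩ := exists_openSegment_of_mem_intrinsicInterior
          (interior_subset_intrinsicInterior (𝕜 := ℝ) hxi) hy
        exact hface y hy z hz ⟨x, hxz, hxF⟩ (left_mem_segment ℝ y z)
      have h1 := affDim_mono hKF
      have h2 : affDim K = d := by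
        rw [affDim, hKspan, AffineSubspace.direction_top, finrank_top, hfrk]
      omega
    · obtain ⟨φ, hφ0, hφle⟩ := exists_support_functional hKcv hxi hint
      have hxK : x ∈ K := hFK hxF
      have hbdd : BddAbove (φ '' K) := ⟨φ x, by rintro _ ⟨y, hy, rfl⟩; exact hφle y hy⟩
      have hsup : sSup (φ '' K) = φ x :=
        le_antisymm (csSup_le ⟨φ x, ⟨x, hxK, rfl⟩⟩ (by rintro _ ⟨y, hy, rfl⟩; exact hφle y hy))
          (le_csSup hbdd ⟨x, hxK, rfl⟩)
      have hEexp : IsExposedFaceOf K (K ∩ {y | φ y = sSup (φ '' K)}) := ⟨φ, hφ0, hbdd, rfl⟩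
      obtain ⟨hEK, hEcv, hEface⟩ := hEexp.isFaceOf hKcv
      have hxE : x ∈ K ∩ {y | φ y = sSup (φ '' K)} := ⟨hxK, by rw [Set.mem_setOf_eq, hsup]⟩
      have hFE : F ⊆ K ∩ {y | φ y = sSup (φ '' K)} := by
        intro y hy
        obtain ⟨z, hz, hxz⟩ := exists_openSegment_of_mem_intrinsicInterior hx hy
        exact hEface y (hFK hy) z (hFK hz) ⟨x, hxz, hxE⟩ (left_mem_segment ℝ y z)
      have hEdim : affDim (K ∩ {y | φ y = sSup (φ '' K)}) ≤ d - 1 := by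
        have := affDim_le_of_subset_hyperplane (E := K ∩ {y | φ y = sSup (φ '' K)}) hφ0
          (M := sSup (φ '' K)) (fun y hy => hy.2)
        rwa [hfrk] at this
      have hspan := affineSpan_eq_of_subset_of_dim_ge hFE ⟨x, hxF⟩ (by omega)
      have hxEri : x ∈ intrinsicInterior ℝ (K ∩ {y | φ y = sSup (φ '' K)}) :=
        intrinsicInterior_mono_of_span_eq hFE hspan hx
      have hEF : K ∩ {y | φ y = sSup (φ '' K)} ⊆ F := by
        intro y hy
        obtain ⟨z, hz, hxz⟩ := exists_openSegment_of_mem_intrinsicInterior hxEri hy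
        exact hface y (hEK hy) z (hEK hz) ⟨x, hxz, hxF⟩ (left_mem_segment ℝ y z)
      exact ⟨φ, hφ0, hbdd, Set.Subset.antisymm hFE hEF⟩
  · rw [Set.not_nonempty_iff_eq_empty] at hint
    have hxK : x ∈ K := hFK hxF
    have hKspan : affineSpan ℝ K ≠ ⊤ := by
      intro h
      obtain ⟨b, hb⟩ := interior_nonempty_of_affineSpan_eq_top hKcv ⟨x, hxK⟩ h
      rw [hint] at hb
      exact hb
    have hdir : (affineSpan ℝ K).direction ≠ ⊤ := by
      intro h
      exact hKspan ((AffineSubspace.eq_iff_direction_eq_of_mem (subset_affineSpan ℝ K hxK)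
        (AffineSubspace.mem_top ℝ _ x)).2 (by rw [h, AffineSubspace.direction_top]))
    have hKdim : affDim K ≤ d - 1 := by
      have := Submodule.finrank_lt (K := ℝ) hdir
      rw [hfrk] at this
      rw [affDim]
      omega
    have hspan := affineSpan_eq_of_subset_of_dim_ge hFK ⟨x, hxF⟩ (by omega)
    have hxriK : x ∈ intrinsicInterior ℝ K := intrinsicInterior_mono_of_span_eq hFK hspan hx
    have hKF : K ⊆ F := by
      intro y hy
      obtain ⟨z, hz, hxz⟩ := exists_openSegment_of_mem_intrinsicInterior hxriK hy
      exact hface y hy z hz ⟨x, hxz, hxF⟩ (left_mem_segment ℝ y z)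
    have hFKeq : F = K := Set.Subset.antisymm hFK hKF
    obtain ⟨φ, hφ0, hφvan⟩ := exists_linearMap_ne_zero_vanishing hdir
    have hconst : ∀ y ∈ K, φ y = φ x := by
      intro y hy
      have h1 : y - x ∈ (affineSpan ℝ K).direction := by
        have := AffineSubspace.vsub_mem_direction (subset_affineSpan ℝ K hy)
          (subset_affineSpan ℝ K hxK)
        rwa [vsub_eq_sub] at this
      have h2 := hφvan _ h1
      rw [map_sub] at h2
      linarith
    have himg : φ '' K = {φ x} := by
      apply Set.Subset.antisymm
      · rintro _ ⟨y, hy, rfl⟩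
        exact hconst y hy
      · rintro _ rfl
        exact ⟨x, hxK, rfl⟩
    refine ⟨φ, hφ0, by rw [himg]; exact bddAbove_singleton, ?_⟩
    rw [himg, csSup_singleton, hFKeq]
    exact Set.Subset.antisymm (fun y hy => ⟨hy, hconst y hy⟩) Set.inter_subset_left

end Aux

/-- Every `(d-1)`-face of a closed convex set `K ⊆ ℝ^d` (`d ≥ 2`) is exposed, and the
`(d-2)`-skeleton of `K` is the boundary of `K` minus the relative interiors of the exposed
`(d-1)`-faces. -/
theorem face_dim_pred_exposed_and_skeleton_eq
    {d : ℕ} (hd : 2 ≤ d) (K : Set (EuclideanSpace ℝ (Fin d)))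
    (hKcl : IsClosed K) (hKcv : Convex ℝ K) :
    (∀ F : Set (EuclideanSpace ℝ (Fin d)),
      IsFaceOf K F → affDim F = d - 1 → IsExposedFaceOf K F) ∧
    kSkeleton (d - 2) K =
      frontier K \
        ⋃ F ∈ {F : Set (EuclideanSpace ℝ (Fin d)) |
            IsExposedFaceOf K F ∧ affDim F = d - 1},
          intrinsicInterior ℝ F := by
  have hfrk : Module.finrank ℝ (EuclideanSpace ℝ (Fin d)) = d := finrank_euclideanSpace_fin
  refine ⟨part1 hd K hKcv, ?_⟩
  ext x
  simp only [kSkeleton, Set.mem_setOf_eq, Set.mem_diff, Set.mem_iUnion, exists_prop,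
    not_exists, not_and, frontier, Set.mem_diff, hKcl.closure_eq]
  constructor
  · rintro ⟨hxK, F₀, hF₀, hxri, hdim₀⟩
    have hxF₀ : x ∈ F₀ := intrinsicInterior_subset hxri
    refine ⟨⟨hxK, ?_⟩, ?_⟩
    · intro hxi
      have hKF : K ⊆ F₀ := by
        intro y hy
        obtain ⟨z, hz, hxz⟩ := exists_openSegment_of_mem_intrinsicInterior
          (interior_subset_intrinsicInterior (𝕜 := ℝ) hxi) hy
        exact hF₀.2.2 y hy z hz ⟨x, hxz, hxF₀⟩ (left_mem_segment ℝ y z)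
      have h1 := affDim_mono hKF
      have h2 : affDim K = d := by
        rw [affDim, affineSpan_eq_top_of_interior_nonempty ⟨x, hxi⟩,
          AffineSubspace.direction_top, finrank_top, hfrk]
      omega
    · rintro G ⟨hGexp, hGdim⟩ hxG
      have hGface := hGexp.isFaceOf hKcv
      have hGsub : G ⊆ F₀ := by
        intro y hy
        obtain ⟨z, hz, hxz⟩ := exists_openSegment_of_mem_intrinsicInterior hxG hy
        exact hF₀.2.2 y (hGface.1 hy) z (hGface.1 hz) ⟨x, hxz, hxF₀⟩ (left_mem_segment ℝ y z)
      have := affDim_mono hGsub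
      omega
  · rintro ⟨⟨hxK, hxint⟩, hxnot⟩
    refine ⟨hxK, faceAt K x, faceAt_isFaceOf hKcv hxK, mem_intrinsicInterior_faceAt hKcv hxK, ?_⟩
    by_contra hgt
    push_neg at hgt
    have hle : affDim (faceAt K x) ≤ d := by
      rw [affDim]
      have := Submodule.finrank_le (affineSpan ℝ (faceAt K x)).direction
      omega
    have : affDim (faceAt K x) = d - 1 ∨ affDim (faceAt K x) = d := by omega
    rcases this with h | h
    · exact hxnot (faceAt K x) ⟨part1 hd K hKcv _ (faceAt_isFaceOf hKcv hxK) h, h⟩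
        (mem_intrinsicInterior_faceAt hKcv hxK)
    · apply hxint
      have hdirtop : (affineSpan ℝ (faceAt K x)).direction = ⊤ := by
        apply Submodule.eq_top_of_finrank_eq
        rw [hfrk]
        exact h
      have hspan : affineSpan ℝ (faceAt K x) = ⊤ :=
        (AffineSubspace.eq_iff_direction_eq_of_mem
          (subset_affineSpan ℝ _ (mem_faceAt_self hxK)) (AffineSubspace.mem_top ℝ _ x)).2
          (by rw [hdirtop, AffineSubspace.direction_top])
      have hri := mem_intrinsicInterior_faceAt hKcv hxK
      rw [mem_intrinsicInterior_iff_ball] at hri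
      obtain ⟨-, ε, hε, hball⟩ := hri
      rw [mem_interior_iff_mem_nhds]
      refine Metric.mem_nhds_iff.2 ⟨ε, hε, fun w hw => ?_⟩
      have hwF : w ∈ faceAt K x := hball w
        (by rw [hspan]; exact AffineSubspace.mem_top ℝ _ w)
        (by simpa [Metric.mem_ball] using hw)
      exact hwF.1
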